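/- Let d ≥ 2 and let A = (a_{ij}) ∈ ℝ^{d×d} be any matrix. Then there exist permutations ρ and π of [d] and vectors u, v ∈ ℝ^d such that the matrix B = (b_{ij}) defined by b_{ij} := a_{ρ(i),π(j)} + u_i + v_j is max-standard, and moreover tdiam(B) = tdiam(A) and tvol(B) = tvol(A). -/

import Mathlib

open scoped BigOperators

/-- Tropical distance between two points of `ℝ^d`. -/
noncomputable def tdist {d : ℕ} (v w : Fin d → ℝ) : ℝ :=
  (⨆ i, (v i - w i)) - ⨅ i, (v i - w i)

/-- Tropical diameter of a square matrix: maximal tropical distance between rows. -/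
noncomputable def tdiam {d : ℕ} (A : Matrix (Fin d) (Fin d) ℝ) : ℝ :=
  ⨆ i, ⨆ j, tdist (A i) (A j)

/-- `A|σ = Σ_i a_{i,σ(i)}`. -/
noncomputable def permSum {d : ℕ} (A : Matrix (Fin d) (Fin d) ℝ) (σ : Equiv.Perm (Fin d)) : ℝ :=
  ∑ i, A i (σ i)

/-- Max-tropical determinant. -/
noncomputable def tdet {d : ℕ} (A : Matrix (Fin d) (Fin d) ℝ) : ℝ :=
  ⨆ σ : Equiv.Perm (Fin d), permSum A σ

/-- Max-tropical volume computed with respect to a permutation `σ₀` attaining the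
tropical determinant (the value does not depend on this choice). -/
noncomputable def tvolWith {d : ℕ} (A : Matrix (Fin d) (Fin d) ℝ)
    (σ₀ : Equiv.Perm (Fin d)) : ℝ :=
  tdet A - ⨆ τ : {τ : Equiv.Perm (Fin d) // τ ≠ σ₀}, permSum A (τ : Equiv.Perm (Fin d))

/-- A matrix is max-standard if the identity permutation attains the tropical
determinant and the first row and column read `(1,0,0,…,0)`. -/
def IsMaxStandard {d : ℕ} [NeZero d] (A : Matrix (Fin d) (Fin d) ℝ) : Prop :=
  permSum A 1 = tdet A ∧
    (∀ j, A 0 j = if j = 0 then 1 else 0) ∧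
    (∀ i, A i 0 = if i = 0 then 1 else 0)

/- ### Auxiliary lemmas -/

lemma mySup_eq {α : Type*} [Finite α] [Nonempty α] {f : α → ℝ} {a : α}
    (h : ∀ i, f i ≤ f a) : (⨆ i, f i) = f a :=
  le_antisymm (ciSup_le h) (le_ciSup (Set.Finite.bddAbove (Set.finite_range f)) a)

lemma myInf_eq {α : Type*} [Finite α] [Nonempty α] {f : α → ℝ} {a : α}
    (h : ∀ i, f a ≤ f i) : (⨅ i, f i) = f a :=
  le_antisymm (ciInf_le (Set.Finite.bddBelow (Set.finite_range f)) a) (le_ciInf h)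

lemma mySup_add {α : Type*} [Finite α] [Nonempty α] (f : α → ℝ) (c : ℝ) :
    (⨆ i, (f i + c)) = (⨆ i, f i) + c := by
  obtain ⟨a, ha⟩ := Finite.exists_max f
  rw [mySup_eq ha, mySup_eq (a := a) (f := fun i => f i + c)
    (fun i => add_le_add_left (ha i) c)]

lemma myInf_add {α : Type*} [Finite α] [Nonempty α] (f : α → ℝ) (c : ℝ) :
    (⨅ i, (f i + c)) = (⨅ i, f i) + c := by
  obtain ⟨a, ha⟩ := Finite.exists_min f
  rw [myInf_eq ha, myInf_eq (a := a) (f := fun i => f i + c)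
    (fun i => add_le_add_left (ha i) c)]

lemma mySup_comp {α β : Type*} [Finite α] [Nonempty α] [Finite β] [Nonempty β]
    (e : β ≃ α) (f : α → ℝ) : (⨆ i, f (e i)) = ⨆ i, f i := by
  obtain ⟨a, ha⟩ := Finite.exists_max f
  rw [mySup_eq ha, mySup_eq (a := e.symm a) (f := fun i => f (e i))
    (fun i => by simpa using ha (e i))]
  simp

lemma myInf_comp {α β : Type*} [Finite α] [Nonempty α] [Finite β] [Nonempty β]
    (e : β ≃ α) (f : α → ℝ) : (⨅ i, f (e i)) = ⨅ i, f i := by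
  obtain ⟨a, ha⟩ := Finite.exists_min f
  rw [myInf_eq ha, myInf_eq (a := e.symm a) (f := fun i => f (e i))
    (fun i => by simpa using ha (e i))]
  simp

lemma perm_ne_nonempty {d : ℕ} (hd : 2 ≤ d) (α : Equiv.Perm (Fin d)) :
    Nonempty {τ : Equiv.Perm (Fin d) // τ ≠ α} := by
  haveI : Nontrivial (Fin d) := Fin.nontrivial_iff_two_le.mpr hd
  obtain ⟨x, y, hxy⟩ := exists_pair_ne (Fin d)
  refine ⟨⟨α * Equiv.swap x y, fun h => hxy ?_⟩⟩
  have hs : Equiv.swap x y = 1 :=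
    mul_left_cancel (a := α) (show α * Equiv.swap x y = α * 1 by rw [mul_one]; exact h)
  exact Equiv.swap_eq_one_iff.mp hs

lemma secondSup_welldef {d : ℕ} (hd : 2 ≤ d) (M : Matrix (Fin d) (Fin d) ℝ)
    (α β : Equiv.Perm (Fin d)) (hα : permSum M α = tdet M) (hβ : permSum M β = tdet M) :
    (⨆ τ : {τ : Equiv.Perm (Fin d) // τ ≠ α}, permSum M (τ : Equiv.Perm (Fin d))) =
      ⨆ τ : {τ : Equiv.Perm (Fin d) // τ ≠ β}, permSum M (τ : Equiv.Perm (Fin d)) := by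
  haveI hna := perm_ne_nonempty hd α
  haveI hnb := perm_ne_nonempty hd β
  have hle : ∀ τ : Equiv.Perm (Fin d), permSum M τ ≤ tdet M := by
    intro τ
    exact le_ciSup (f := permSum M) (Set.Finite.bddAbove (Set.finite_range (permSum M))) τ
  rcases eq_or_ne α β with rfl | hab
  · rfl
  · have h1 : (⨆ τ : {τ : Equiv.Perm (Fin d) // τ ≠ α}, permSum M (τ : Equiv.Perm (Fin d)))
        = tdet M := by
      refine le_antisymm (ciSup_le fun τ => hle τ) ?_
      rw [← hβ]
      exact le_ciSup (f := fun τ : {τ : Equiv.Perm (Fin d) // τ ≠ α} =>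
        permSum M (τ : Equiv.Perm (Fin d)))
        (Set.Finite.bddAbove (Set.finite_range _)) ⟨β, fun h => hab h.symm⟩
    have h2 : (⨆ τ : {τ : Equiv.Perm (Fin d) // τ ≠ β}, permSum M (τ : Equiv.Perm (Fin d)))
        = tdet M := by
      refine le_antisymm (ciSup_le fun τ => hle τ) ?_
      rw [← hα]
      exact le_ciSup (f := fun τ : {τ : Equiv.Perm (Fin d) // τ ≠ β} =>
        permSum M (τ : Equiv.Perm (Fin d)))
        (Set.Finite.bddAbove (Set.finite_range _)) ⟨α, hab⟩
    rw [h1, h2]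

/-- every square matrix is equivalent to a max-standard matrix,
via row/column permutations and adding constants to rows and columns; this
equivalence preserves the tropical diameter and the tropical volume. -/
theorem exists_maxStandard_equivalent (d : ℕ) [NeZero d] (hd : 2 ≤ d)
    (A : Matrix (Fin d) (Fin d) ℝ) :
    ∃ (B : Matrix (Fin d) (Fin d) ℝ) (ρ π : Equiv.Perm (Fin d)) (u v : Fin d → ℝ),
      (∀ i j, B i j = A (ρ i) (π j) + u i + v j) ∧
      IsMaxStandard B ∧
      tdiam B = tdiam A ∧
      (∀ σ₀ σ₁ : Equiv.Perm (Fin d),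
        permSum A σ₀ = tdet A → permSum B σ₁ = tdet B →
        tvolWith B σ₁ = tvolWith A σ₀) := by
  obtain ⟨σ₀, hσ₀⟩ := Finite.exists_max (permSum A)
  have hdetA : tdet A = permSum A σ₀ := mySup_eq hσ₀
  set v : Fin d → ℝ := fun j => (if j = 0 then 1 else 0) - A 0 (σ₀ j) with hv
  set u : Fin d → ℝ := fun i => (if i = 0 then 1 else 0) - A i (σ₀ 0) - (1 - A 0 (σ₀ 0)) with hu
  set B : Matrix (Fin d) (Fin d) ℝ := Matrix.of fun i j => A i (σ₀ j) + u i + v j with hB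
  set C : ℝ := (∑ i, u i) + (∑ j, v j) with hC
  have hBdef : ∀ i j, B i j = A i (σ₀ j) + u i + v j := fun i j => rfl
  have hperm : ∀ τ : Equiv.Perm (Fin d), permSum B τ = permSum A (σ₀ * τ) + C := by
    intro τ
    have h1 : ∑ i, v (τ i) = ∑ j, v j := Equiv.sum_comp τ v
    simp only [permSum, hBdef, Equiv.Perm.mul_apply, hC, Finset.sum_add_distrib, h1]
    ring
  have hBle : ∀ τ : Equiv.Perm (Fin d), permSum B τ ≤ permSum B 1 := by
    intro τ
    rw [hperm τ, hperm 1, mul_one]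
    linarith [hσ₀ (σ₀ * τ)]
  have hdetB : tdet B = permSum B 1 := mySup_eq hBle
  have hdetB' : tdet B = tdet A + C := by
    rw [hdetB, hperm 1, mul_one, hdetA]
  refine ⟨B, 1, σ₀, u, v, fun i j => rfl, ⟨hdetB.symm, ?_, ?_⟩, ?_, ?_⟩
  · intro j
    simp only [hBdef, hu, hv]
    rw [if_true]
    ring
  · intro i
    simp only [hBdef, hu, hv]
    rw [if_true]
    ring
  · -- tdiam
    have hdist : ∀ i j, tdist (B i) (B j) = tdist (A i) (A j) := by
      intro i j
      have key : ∀ k, B i k - B j k = (A i (σ₀ k) - A j (σ₀ k)) + (u i - u j) := by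
        intro k; simp only [hBdef]; ring
      unfold tdist
      have hs : (⨆ k, (B i k - B j k)) = (⨆ k, (A i k - A j k)) + (u i - u j) := by
        simp only [key]
        rw [mySup_add (fun k => A i (σ₀ k) - A j (σ₀ k)) (u i - u j),
          mySup_comp σ₀ (fun k => A i k - A j k)]
      have hi : (⨅ k, (B i k - B j k)) = (⨅ k, (A i k - A j k)) + (u i - u j) := by
        simp only [key]
        rw [myInf_add (fun k => A i (σ₀ k) - A j (σ₀ k)) (u i - u j),
          myInf_comp σ₀ (fun k => A i k - A j k)]
      rw [hs, hi]; ring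
    simp only [tdiam, hdist]
  · -- tvol
    intro σ₀' σ₁ hA' hB1'
    haveI := perm_ne_nonempty hd σ₁
    haveI := perm_ne_nonempty hd (σ₀ * σ₁)
    have hσσ : permSum A (σ₀ * σ₁) = tdet A := by
      have := hperm σ₁
      rw [hB1', hdetB'] at this
      linarith
    let e : {τ : Equiv.Perm (Fin d) // τ ≠ σ₁} ≃ {τ : Equiv.Perm (Fin d) // τ ≠ σ₀ * σ₁} :=
      { toFun := fun τ => ⟨σ₀ * (τ : Equiv.Perm (Fin d)),
          fun h => τ.2 (mul_left_cancel h)⟩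
        invFun := fun τ => ⟨σ₀⁻¹ * (τ : Equiv.Perm (Fin d)),
          fun h => τ.2 (eq_mul_of_inv_mul_eq h)⟩
        left_inv := fun τ => Subtype.ext (inv_mul_cancel_left σ₀ _)
        right_inv := fun τ => Subtype.ext (mul_inv_cancel_left σ₀ _) }
    have key : (⨆ τ : {τ : Equiv.Perm (Fin d) // τ ≠ σ₁}, permSum B (τ : Equiv.Perm (Fin d)))
        = (⨆ τ : {τ : Equiv.Perm (Fin d) // τ ≠ σ₀ * σ₁},
            permSum A (τ : Equiv.Perm (Fin d))) + C := by
      have h1 : ∀ τ : {τ : Equiv.Perm (Fin d) // τ ≠ σ₁},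
          permSum B (τ : Equiv.Perm (Fin d)) =
            (fun τ' : {τ : Equiv.Perm (Fin d) // τ ≠ σ₀ * σ₁} =>
              permSum A (τ' : Equiv.Perm (Fin d))) (e τ) + C := by
        intro τ
        simp only [hperm]
        rfl
      calc (⨆ τ : {τ : Equiv.Perm (Fin d) // τ ≠ σ₁}, permSum B (τ : Equiv.Perm (Fin d)))
          = ⨆ τ : {τ : Equiv.Perm (Fin d) // τ ≠ σ₁},
              ((fun τ' : {τ : Equiv.Perm (Fin d) // τ ≠ σ₀ * σ₁} =>
                permSum A (τ' : Equiv.Perm (Fin d))) (e τ) + C) := by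
            exact iSup_congr h1
        _ = (⨆ τ : {τ : Equiv.Perm (Fin d) // τ ≠ σ₁},
              (fun τ' : {τ : Equiv.Perm (Fin d) // τ ≠ σ₀ * σ₁} =>
                permSum A (τ' : Equiv.Perm (Fin d))) (e τ)) + C := mySup_add _ C
        _ = (⨆ τ : {τ : Equiv.Perm (Fin d) // τ ≠ σ₀ * σ₁},
              permSum A (τ : Equiv.Perm (Fin d))) + C := by
            rw [mySup_comp e (fun τ' : {τ : Equiv.Perm (Fin d) // τ ≠ σ₀ * σ₁} =>
              permSum A (τ' : Equiv.Perm (Fin d)))]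
    unfold tvolWith
    rw [key, hdetB', secondSup_welldef hd A (σ₀ * σ₁) σ₀' hσσ hA']
    ring
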